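/- Let R be a finite commutative local ring with maximal ideal m, G = GL_n(R), and let W be the group of permutation matrices, L the diagonal subgroup, U and V the upper and lower unitriangular subgroups, and G_0 the kernel of reduction mod m. Then G is the disjoint union over w ∈ W of the sets G_w = V·w·L·U·G_0. -/

import Mathlib

open Matrix MonoidAlgebra

namespace PS

variable {n : ℕ} {R : Type*} [CommRing R]

/-- `g` is upper unitriangular. -/
def IsU (g : GL (Fin n) R) : Prop :=
  (∀ i : Fin n, (g : Matrix (Fin n) (Fin n) R) i i = 1) ∧
    ∀ i j : Fin n, j < i → (g : Matrix (Fin n) (Fin n) R) i j = 0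

/-- `g` is lower unitriangular. -/
def IsV (g : GL (Fin n) R) : Prop :=
  (∀ i : Fin n, (g : Matrix (Fin n) (Fin n) R) i i = 1) ∧
    ∀ i j : Fin n, i < j → (g : Matrix (Fin n) (Fin n) R) i j = 0

/-- `g` is diagonal. -/
def IsL (g : GL (Fin n) R) : Prop :=
  ∀ i j : Fin n, i ≠ j → (g : Matrix (Fin n) (Fin n) R) i j = 0

/-- `g` is a permutation matrix. -/
def IsW (g : GL (Fin n) R) : Prop :=
  ∃ σ : Equiv.Perm (Fin n), (g : Matrix (Fin n) (Fin n) R) = σ.permMatrix R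

def Uset (n : ℕ) (R : Type*) [CommRing R] : Set (GL (Fin n) R) := {g | IsU g}
def Vset (n : ℕ) (R : Type*) [CommRing R] : Set (GL (Fin n) R) := {g | IsV g}
def Lset (n : ℕ) (R : Type*) [CommRing R] : Set (GL (Fin n) R) := {g | IsL g}
def Wset (n : ℕ) (R : Type*) [CommRing R] : Set (GL (Fin n) R) := {g | IsW g}

/-- the diagonal element of `GL n R` with unit entries `d`. -/
def diagGL (d : Fin n → Rˣ) : GL (Fin n) R :=
  ⟨Matrix.diagonal fun i => (d i : R), Matrix.diagonal fun i => ((d i)⁻¹ : Rˣ),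
   by rw [Matrix.diagonal_mul_diagonal]; convert Matrix.diagonal_one using 2; simp,
   by rw [Matrix.diagonal_mul_diagonal]; convert Matrix.diagonal_one using 2; simp⟩

/-- the permutation matrix of `σ`, as an element of `GL n R`. -/
def permGL (σ : Equiv.Perm (Fin n)) : GL (Fin n) R :=
  ⟨σ.permMatrix R, (σ⁻¹).permMatrix R,
   by
    simp only [Equiv.Perm.permMatrix, ← PEquiv.toMatrix_trans, ← Equiv.toPEquiv_trans]
    simp [Equiv.Perm.inv_def, Equiv.self_trans_symm, Equiv.symm_trans_self, Equiv.toPEquiv_refl, PEquiv.toMatrix_refl],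
   by
    simp only [Equiv.Perm.permMatrix, ← PEquiv.toMatrix_trans, ← Equiv.toPEquiv_trans]
    simp [Equiv.Perm.inv_def, Equiv.self_trans_symm, Equiv.symm_trans_self, Equiv.toPEquiv_refl, PEquiv.toMatrix_refl]⟩

/-- `H^w = w⁻¹ H w`, as a subset of the group. -/
def conjSet {G : Type*} [Group G] (S : Set G) (w : G) : Set G := {g | w * g * w⁻¹ ∈ S}

/-- the set of adjacent transpositions (standard Coxeter generators) in `S_n`. -/
def adjT (n : ℕ) : Set (Equiv.Perm (Fin n)) :=
  {σ | ∃ i j : Fin n, (i : ℕ) + 1 = (j : ℕ) ∧ σ = Equiv.swap i j}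

/-- the Coxeter word length of a permutation, with respect to adjacent transpositions. -/
noncomputable def permLength {n : ℕ} (σ : Equiv.Perm (Fin n)) : ℕ :=
  sInf {k | ∃ l : List (Equiv.Perm (Fin n)),
    l.length = k ∧ (∀ τ ∈ l, τ ∈ adjT n) ∧ l.prod = σ}

open scoped Classical in
/-- the averaging element `e_S = |S|⁻¹ ∑_{h ∈ S} h` in the complex group algebra. -/
noncomputable def eAvg {G : Type*} [Group G] [Fintype G] (S : Set G) : MonoidAlgebra ℂ G :=
  (S.toFinset.card : ℂ)⁻¹ • ∑ h ∈ S.toFinset, MonoidAlgebra.of ℂ G h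

/-- the reduction-mod-`m` homomorphism `GL_n(R) → GL_n(R/m)` for a local ring `R`. -/
noncomputable def red (n : ℕ) (R : Type*) [CommRing R] [IsLocalRing R] :
    GL (Fin n) R →* GL (Fin n) (IsLocalRing.ResidueField R) :=
  Matrix.GeneralLinearGroup.map (IsLocalRing.residue R)

/-- the congruence kernel `G_0 = ker (GL_n(R) → GL_n(R/m))`. -/
noncomputable def G0 (n : ℕ) (R : Type*) [CommRing R] [IsLocalRing R] : Set (GL (Fin n) R) :=
  {g | red n R g = 1}

variable [Fintype R] [DecidableEq R]

/-- the primitive idempotent `e_χ = |L|⁻¹ ∑_{l ∈ L} χ(l)⁻¹ l` of `C[L] ⊆ C[G]` attached to the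
character `χ` of `L ≅ (Rˣ)^n`. -/
noncomputable def eChi (χ : (Fin n → Rˣ) →* ℂˣ) : MonoidAlgebra ℂ (GL (Fin n) R) :=
  (Fintype.card (Fin n → Rˣ) : ℂ)⁻¹ •
    ∑ d : Fin n → Rˣ, (((χ d)⁻¹ : ℂˣ) : ℂ) • MonoidAlgebra.of ℂ (GL (Fin n) R) (diagGL d)

/-- the representation `i(χ) ≅ C[G] e_U e_V e_χ`, as a `ℂ`-subspace of `C[G]`
(with `G` acting by left multiplication). -/
noncomputable def Vrep (n : ℕ) (R : Type*) [CommRing R] [Fintype R] [DecidableEq R]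
    (χ : (Fin n → Rˣ) →* ℂˣ) : Submodule ℂ (MonoidAlgebra ℂ (GL (Fin n) R)) :=
  LinearMap.range (LinearMap.mulRight ℂ (eAvg (Uset n R) * eAvg (Vset n R) * eChi χ))

/-- the space `Hom_G(i(χ), i(σ))` of `G`-equivariant linear maps. -/
noncomputable def HomG (n : ℕ) (R : Type*) [CommRing R] [Fintype R] [DecidableEq R]
    (χ σ : (Fin n → Rˣ) →* ℂˣ) :
    Submodule ℂ (↥(Vrep n R χ) →ₗ[ℂ] ↥(Vrep n R σ)) where
  carrier := {f | ∀ (g : GL (Fin n) R) (x y : Vrep n R χ),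
    (x : MonoidAlgebra ℂ (GL (Fin n) R)) = MonoidAlgebra.of ℂ (GL (Fin n) R) g * (y : MonoidAlgebra ℂ (GL (Fin n) R)) →
    ((f x : Vrep n R σ) : MonoidAlgebra ℂ (GL (Fin n) R)) = MonoidAlgebra.of ℂ (GL (Fin n) R) g * ((f y : Vrep n R σ) : MonoidAlgebra ℂ (GL (Fin n) R))}
  add_mem' := by
    intro f g hf hg k x y h
    simp only [LinearMap.add_apply, Submodule.coe_add, hf k x y h, hg k x y h, mul_add]
  zero_mem' := by intro k x y h; simp
  smul_mem' := by
    intro c f hf k x y h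
    simp only [LinearMap.smul_apply, Submodule.coe_smul, hf k x y h, Algebra.mul_smul_comm]

end PS




namespace BDU

variable {R : Type*} [CommRing R]

/-- lower unitriangular -/
def LowU {n : ℕ} (M : Matrix (Fin n) (Fin n) R) : Prop :=
  (∀ i, M i i = 1) ∧ ∀ i j : Fin n, i < j → M i j = 0

/-- upper unitriangular -/
def UpU {n : ℕ} (M : Matrix (Fin n) (Fin n) R) : Prop :=
  (∀ i, M i i = 1) ∧ ∀ i j : Fin n, j < i → M i j = 0

theorem LowU.one {n : ℕ} : LowU (1 : Matrix (Fin n) (Fin n) R) :=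
  ⟨fun i => Matrix.one_apply_eq i, fun i j h => Matrix.one_apply_ne (ne_of_lt h)⟩

theorem UpU.one {n : ℕ} : UpU (1 : Matrix (Fin n) (Fin n) R) :=
  ⟨fun i => Matrix.one_apply_eq i, fun i j h => Matrix.one_apply_ne (ne_of_lt h).symm⟩

theorem LowU.mul {n : ℕ} {M N : Matrix (Fin n) (Fin n) R} (hM : LowU M) (hN : LowU N) :
    LowU (M * N) := by
  constructor
  · intro i
    rw [Matrix.mul_apply, Finset.sum_eq_single i]
    · rw [hM.1, hN.1, one_mul]
    · intro k _ hk
      rcases lt_or_gt_of_ne hk with h | h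
      · rw [hN.2 k i h, mul_zero]
      · rw [hM.2 i k h, zero_mul]
    · simp
  · intro i j hij
    rw [Matrix.mul_apply]
    apply Finset.sum_eq_zero
    intro k _
    rcases lt_or_ge i k with h | h
    · rw [hM.2 i k h, zero_mul]
    · rw [hN.2 k j (lt_of_le_of_lt h hij), mul_zero]

theorem UpU.mul {n : ℕ} {M N : Matrix (Fin n) (Fin n) R} (hM : UpU M) (hN : UpU N) :
    UpU (M * N) := by
  constructor
  · intro i
    rw [Matrix.mul_apply, Finset.sum_eq_single i]
    · rw [hM.1, hN.1, one_mul]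
    · intro k _ hk
      rcases lt_or_gt_of_ne hk with h | h
      · rw [hM.2 i k h, zero_mul]
      · rw [hN.2 k i h, mul_zero]
    · simp
  · intro i j hij
    rw [Matrix.mul_apply]
    apply Finset.sum_eq_zero
    intro k _
    rcases lt_or_ge k i with h | h
    · rw [hM.2 i k h, zero_mul]
    · rw [hN.2 k j (lt_of_lt_of_le hij h), mul_zero]

theorem LowU.blockTriangular {n : ℕ} {M : Matrix (Fin n) (Fin n) R} (hM : LowU M) :
    M.BlockTriangular OrderDual.toDual := fun i j h => hM.2 i j h

theorem UpU.blockTriangular {n : ℕ} {M : Matrix (Fin n) (Fin n) R} (hM : UpU M) :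
    M.BlockTriangular id := fun i j h => hM.2 i j h

theorem LowU.det {n : ℕ} {M : Matrix (Fin n) (Fin n) R} (hM : LowU M) : M.det = 1 := by
  rw [Matrix.det_of_lowerTriangular M hM.blockTriangular]
  simp [hM.1]

theorem UpU.det {n : ℕ} {M : Matrix (Fin n) (Fin n) R} (hM : UpU M) : M.det = 1 := by
  rw [Matrix.det_of_upperTriangular hM.blockTriangular]
  simp [hM.1]






/-- extend a matrix by a `1` pivot at position `(p,p)`, other indices embedded via `succAbove`. -/
def pad {n : ℕ} (p : Fin (n + 1)) (M : Matrix (Fin n) (Fin n) R) :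
    Matrix (Fin (n + 1)) (Fin (n + 1)) R :=
  Matrix.of fun i j => match finSuccEquiv' p i, finSuccEquiv' p j with
    | none, none => 1
    | some a, some b => M a b
    | _, _ => 0

@[simp] theorem ext_apply_pp {n : ℕ} (p : Fin (n + 1)) (M : Matrix (Fin n) (Fin n) R) :
    pad p M p p = 1 := by simp [pad, finSuccEquiv'_at]

@[simp] theorem ext_apply_ps {n : ℕ} (p : Fin (n + 1)) (M : Matrix (Fin n) (Fin n) R)
    (b : Fin n) : pad p M p (p.succAbove b) = 0 := by
  simp [pad, finSuccEquiv'_at, finSuccEquiv'_succAbove]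

@[simp] theorem ext_apply_sp {n : ℕ} (p : Fin (n + 1)) (M : Matrix (Fin n) (Fin n) R)
    (a : Fin n) : pad p M (p.succAbove a) p = 0 := by
  simp [pad, finSuccEquiv'_at, finSuccEquiv'_succAbove]

@[simp] theorem ext_apply_ss {n : ℕ} (p : Fin (n + 1)) (M : Matrix (Fin n) (Fin n) R)
    (a b : Fin n) : pad p M (p.succAbove a) (p.succAbove b) = M a b := by
  simp [pad, finSuccEquiv'_succAbove]

theorem LowU.pad {n : ℕ} {p : Fin (n + 1)} {M : Matrix (Fin n) (Fin n) R} (hM : LowU M) :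
    LowU (BDU.pad p M) := by
  constructor
  · intro i
    rcases eq_or_ne i p with rfl | h
    · simp
    · obtain ⟨a, rfl⟩ := Fin.exists_succAbove_eq h
      simp [hM.1]
  · intro i j hij
    rcases eq_or_ne i p with rfl | hi
    · rcases eq_or_ne j i with rfl | hj
      · exact absurd hij (lt_irrefl _)
      · obtain ⟨b, rfl⟩ := Fin.exists_succAbove_eq hj
        simp
    · obtain ⟨a, rfl⟩ := Fin.exists_succAbove_eq hi
      rcases eq_or_ne j p with rfl | hj
      · simp
      · obtain ⟨b, rfl⟩ := Fin.exists_succAbove_eq hj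
        rw [ext_apply_ss]
        exact hM.2 a b (by simpa using (Fin.succAbove_lt_succAbove_iff).mp hij)

theorem UpU.pad {n : ℕ} {p : Fin (n + 1)} {M : Matrix (Fin n) (Fin n) R} (hM : UpU M) :
    UpU (BDU.pad p M) := by
  constructor
  · intro i
    rcases eq_or_ne i p with rfl | h
    · simp
    · obtain ⟨a, rfl⟩ := Fin.exists_succAbove_eq h
      simp [hM.1]
  · intro i j hij
    rcases eq_or_ne i p with rfl | hi
    · rcases eq_or_ne j i with rfl | hj
      · exact absurd hij (lt_irrefl _)
      · obtain ⟨b, rfl⟩ := Fin.exists_succAbove_eq hj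
        simp
    · obtain ⟨a, rfl⟩ := Fin.exists_succAbove_eq hi
      rcases eq_or_ne j p with rfl | hj
      · simp
      · obtain ⟨b, rfl⟩ := Fin.exists_succAbove_eq hj
        rw [ext_apply_ss]
        exact hM.2 a b (by simpa using (Fin.succAbove_lt_succAbove_iff).mp hij)

/-- matrix supported on column `p` -/
def colM {n : ℕ} (p : Fin n) (c : Fin n → R) : Matrix (Fin n) (Fin n) R :=
  Matrix.of fun i j => if j = p then c i else 0

/-- matrix supported on row `p` -/
def rowM {n : ℕ} (p : Fin n) (r : Fin n → R) : Matrix (Fin n) (Fin n) R :=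
  Matrix.of fun i j => if i = p then r j else 0

theorem colM_mul {n : ℕ} (p : Fin n) (c : Fin n → R) (A : Matrix (Fin n) (Fin n) R) :
    colM p c * A = Matrix.of fun i j => c i * A p j := by
  ext i j
  rw [Matrix.mul_apply, Finset.sum_eq_single p] <;> simp [colM]
  · intro k h; exact fun h' => absurd h' h

theorem mul_rowM {n : ℕ} (p : Fin n) (r : Fin n → R) (A : Matrix (Fin n) (Fin n) R) :
    A * rowM p r = Matrix.of fun i j => A i p * r j := by
  ext i j
  rw [Matrix.mul_apply, Finset.sum_eq_single p] <;> simp [rowM]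
  · intro k h; exact fun h' => absurd h' h

theorem one_add_mul_one_sub {n : ℕ} {X : Matrix (Fin n) (Fin n) R} (h : X * X = 0) :
    (1 + X) * (1 - X) = 1 := by
  rw [add_mul, one_mul, mul_sub, mul_one, h]
  abel

theorem one_sub_mul_one_add {n : ℕ} {X : Matrix (Fin n) (Fin n) R} (h : X * X = 0) :
    (1 - X) * (1 + X) = 1 := by
  rw [sub_mul, one_mul, mul_add, mul_one, h]
  abel

theorem LowU.one_add_colM {n : ℕ} {p : Fin n} {c : Fin n → R} (hc : ∀ i, ¬ p < i → c i = 0) :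
    LowU (1 + colM p c) := by
  constructor
  · intro i
    have : (colM p c) i i = 0 := by
      simp only [colM, Matrix.of_apply]
      split_ifs with h
      · subst h; exact hc i (lt_irrefl i)
      · rfl
    simp [Matrix.add_apply, this]
  · intro i j hij
    have : (colM p c) i j = 0 := by
      simp only [colM, Matrix.of_apply]
      split_ifs with h
      · subst h; exact hc i (fun hlt => absurd (hlt.trans hij) (lt_irrefl _))
      · rfl
    simp [Matrix.add_apply, this, Matrix.one_apply_ne (ne_of_lt hij)]

theorem UpU.one_add_rowM {n : ℕ} {p : Fin n} {r : Fin n → R} (hr : ∀ j, ¬ p < j → r j = 0) :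
    UpU (1 + rowM p r) := by
  constructor
  · intro i
    have : (rowM p r) i i = 0 := by
      simp only [rowM, Matrix.of_apply]
      split_ifs with h
      · subst h; exact hr i (lt_irrefl i)
      · rfl
    simp [Matrix.add_apply, this]
  · intro i j hij
    have : (rowM p r) i j = 0 := by
      simp only [rowM, Matrix.of_apply]
      split_ifs with h
      · subst h; exact hr j (fun hlt => absurd (hij.trans hlt) (lt_irrefl _))
      · rfl
    simp [Matrix.add_apply, this, Matrix.one_apply_ne (ne_of_lt hij).symm]

theorem colM_sq {n : ℕ} {p : Fin n} {c : Fin n → R} (h : c p = 0) :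
    colM p c * colM p c = 0 := by
  rw [colM_mul]
  ext i j
  simp [colM, h]

theorem rowM_sq {n : ℕ} {p : Fin n} {r : Fin n → R} (h : r p = 0) :
    rowM p r * rowM p r = 0 := by
  rw [mul_rowM]
  ext i j
  simp [rowM, h]

theorem neg_colM {n : ℕ} (p : Fin n) (c : Fin n → R) : -(colM p c) = colM p (-c) := by
  ext i j; simp [colM]; split_ifs <;> simp

theorem neg_rowM {n : ℕ} (p : Fin n) (r : Fin n → R) : -(rowM p r) = rowM p (-r) := by
  ext i j; simp [rowM]; split_ifs <;> simp


theorem exists_bruhat {K : Type*} [Field K] [DecidableEq K] :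
    ∀ (n : ℕ) (A : Matrix (Fin n) (Fin n) K), IsUnit A.det →
      ∃ (σ : Equiv.Perm (Fin n)) (v : Matrix (Fin n) (Fin n) K) (d : Fin n → K)
        (u : Matrix (Fin n) (Fin n) K),
        LowU v ∧ (∀ i, d i ≠ 0) ∧ UpU u ∧
          A = v * (σ.permMatrix K * (Matrix.diagonal d * u)) := by
  intro n
  induction n with
  | zero =>
    intro A _
    exact ⟨1, 1, Fin.elim0, 1, LowU.one, fun i => i.elim0, UpU.one, Subsingleton.elim _ _⟩
  | succ n ih =>
    intro A hA
    -- find the topmost nonzero entry of column 0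
    have hcol : ∃ i, A i 0 ≠ 0 := by
      by_contra h
      push_neg at h
      rw [Matrix.det_eq_zero_of_column_eq_zero 0 h] at hA
      simpa using hA
    set S : Finset (Fin (n + 1)) := Finset.univ.filter (fun i => A i 0 ≠ 0) with hSdef
    have hS : S.Nonempty := by
      obtain ⟨i, hi⟩ := hcol
      exact ⟨i, by simp [hSdef, hi]⟩
    set i₀ : Fin (n + 1) := S.min' hS with hi₀def
    have hpiv : A i₀ 0 ≠ 0 := by
      have := S.min'_mem hS
      simpa [hSdef] using this
    have habove : ∀ i, i < i₀ → A i 0 = 0 := by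
      intro i hi
      by_contra h
      exact absurd (S.min'_le i (by simp [hSdef, h])) (not_le.mpr hi)
    -- clear column 0 below the pivot
    set c : Fin (n + 1) → K := fun i => if i₀ < i then -(A i 0 / A i₀ 0) else 0 with hcdef
    have hc : ∀ i, ¬ i₀ < i → c i = 0 := fun i h => by simp [hcdef, h]
    set X := colM i₀ c with hXdef
    have hX2 : X * X = 0 := colM_sq (by simp [hcdef])
    set B := (1 + X) * A with hBdef
    have hXA : ∀ i j, (X * A) i j = c i * A i₀ j := by
      intro i j; rw [hXdef, colM_mul]; rfl
    have hBrow : ∀ j, B i₀ j = A i₀ j := by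
      intro j
      rw [hBdef, add_mul, one_mul, Matrix.add_apply, hXA]
      simp [hcdef]
    have hB0 : ∀ i, B i 0 = if i = i₀ then A i₀ 0 else 0 := by
      intro i
      rw [hBdef, add_mul, one_mul, Matrix.add_apply, hXA]
      rcases lt_trichotomy i i₀ with h | h | h
      · rw [habove i h, if_neg (ne_of_lt h)]
        simp [hcdef, not_lt.mpr h.le]
      · subst h
        simp [hcdef]
      · rw [if_neg (ne_of_gt h)]
        rw [hcdef]
        simp only [if_pos h]
        field_simp
        ring
    -- clear row i₀ to the right of the pivot
    set r : Fin (n + 1) → K := fun j => if (0 : Fin (n + 1)) < j then -(B i₀ j / B i₀ 0) else 0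
      with hrdef
    have hr : ∀ j, ¬ (0 : Fin (n + 1)) < j → r j = 0 := fun j h => by simp [hrdef, h]
    set Y := rowM 0 r with hYdef
    have hY2 : Y * Y = 0 := rowM_sq (by simp [hrdef])
    set C := B * (1 + Y) with hCdef
    have hBY : ∀ i j, (B * Y) i j = B i 0 * r j := by
      intro i j; rw [hYdef, mul_rowM]; rfl
    have hB00 : B i₀ 0 = A i₀ 0 := hBrow 0
    have hCrow : ∀ j, C i₀ j = if j = 0 then A i₀ 0 else 0 := by
      intro j
      rw [hCdef, mul_add, mul_one, Matrix.add_apply, hBY]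
      rcases eq_or_ne j 0 with rfl | hj
      · simp [hrdef, hB00]
      · rw [if_neg hj, hrdef]
        simp only [if_pos (Fin.pos_of_ne_zero hj)]
        rw [hB00]
        field_simp
        ring
    have hCcol : ∀ i, i ≠ i₀ → C i 0 = 0 := by
      intro i hi
      rw [hCdef, mul_add, mul_one, Matrix.add_apply, hBY]
      simp [hrdef, hB0, hi]
    have hC00 : C i₀ 0 = A i₀ 0 := by rw [hCrow 0, if_pos rfl]
    -- determinant bookkeeping
    have hLV : LowU (1 + X) := LowU.one_add_colM hc
    have hUY : UpU (1 + Y) := UpU.one_add_rowM hr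
    have hCform : C = (1 + X) * A * (1 + Y) := by rw [hCdef, hBdef]
    have hCdetA : C.det = A.det := by
      rw [hCform, Matrix.det_mul, Matrix.det_mul, hLV.det, hUY.det, one_mul, mul_one]
    have hCdet : IsUnit C.det := hCdetA ▸ hA
    set C' := C.submatrix i₀.succAbove Fin.succ with hC'def
    have hdetexp : C.det = (-1) ^ (i₀ : ℕ) * A i₀ 0 * C'.det := by
      rw [Matrix.det_succ_column_zero, Finset.sum_eq_single i₀]
      · rw [hC00]
      · intro i _ hi
        rw [hCcol i hi]
        ring
      · simp
    have hC'det : IsUnit C'.det := by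
      rw [isUnit_iff_ne_zero]
      intro h
      rw [hdetexp, h, mul_zero] at hCdet
      simpa using hCdet
    obtain ⟨σ', v', d', u', hv', hd', hu', hfact⟩ := ih C' hC'det
    -- assemble
    set σ : Equiv.Perm (Fin (n + 1)) :=
      (finSuccEquiv' i₀).trans ((Equiv.optionCongr σ').trans (finSuccEquiv' 0).symm) with hσdef
    have hσp : σ i₀ = 0 := by
      simp [hσdef, finSuccEquiv'_at, finSuccEquiv'_symm_none]
    have hσs : ∀ y, σ (i₀.succAbove y) = (σ' y).succ := by
      intro y
      simp [hσdef, finSuccEquiv'_succAbove, finSuccEquiv'_symm_some]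
    set d₂ : Fin (n + 1) → K := Fin.cases (A i₀ 0) d' with hd₂def
    have hd₂0 : d₂ 0 = A i₀ 0 := rfl
    have hd₂s : ∀ b, d₂ b.succ = d' b := fun b => by simp [hd₂def]
    set V₂ := pad i₀ v' with hV₂def
    set U₂ := pad (0 : Fin (n + 1)) u' with hU₂def
    have hU₂00 : U₂ 0 0 = 1 := ext_apply_pp _ _
    have hU₂0s : ∀ b : Fin n, U₂ 0 b.succ = 0 := by
      intro b
      rw [← Fin.zero_succAbove b]
      exact ext_apply_ps _ _ _
    have hU₂s0 : ∀ a : Fin n, U₂ a.succ 0 = 0 := by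
      intro a
      rw [← Fin.zero_succAbove a]
      exact ext_apply_sp _ _ _
    have hU₂ss : ∀ a b : Fin n, U₂ a.succ b.succ = u' a b := by
      intro a b
      rw [← Fin.zero_succAbove a, ← Fin.zero_succAbove b]
      exact ext_apply_ss _ _ _ _
    have hKey : C = V₂ * (σ.permMatrix K * (Matrix.diagonal d₂ * U₂)) := by
      have hPD : σ.permMatrix K * (Matrix.diagonal d₂ * U₂) =
          (Matrix.diagonal d₂ * U₂).submatrix σ id :=
        PEquiv.toMatrix_toPEquiv_mul σ _
      ext i j
      rw [hPD, Matrix.mul_apply]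
      have hterm : ∀ a, V₂ i a * ((Matrix.diagonal d₂ * U₂).submatrix σ id) a j
          = V₂ i a * (d₂ (σ a) * U₂ (σ a) j) := by
        intro a
        rw [Matrix.submatrix_apply, Matrix.diagonal_mul, id]
      simp only [hterm]
      rw [Fin.sum_univ_succAbove (fun a => V₂ i a * (d₂ (σ a) * U₂ (σ a) j)) i₀]
      rcases eq_or_ne i i₀ with rfl | hi
      · rw [hV₂def, ext_apply_pp]
        have hzero : ∀ y : Fin n, pad i₀ v' i₀ (i₀.succAbove y) *
            (d₂ (σ (i₀.succAbove y)) * U₂ (σ (i₀.succAbove y)) j) = 0 := by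
          intro y; rw [ext_apply_ps, zero_mul]
        rw [Finset.sum_congr rfl (fun y _ => hzero y), Finset.sum_const_zero, add_zero,
          one_mul, hσp, hd₂0]
        rcases eq_or_ne j 0 with rfl | hj
        · rw [hU₂00, mul_one, hC00]
        · obtain ⟨b, rfl⟩ := Fin.exists_succAbove_eq hj
          rw [Fin.zero_succAbove] at *
          rw [hU₂0s, mul_zero, hCrow, if_neg (by simp [Fin.succ_ne_zero])]
      · obtain ⟨x, rfl⟩ := Fin.exists_succAbove_eq hi
        rw [hV₂def, ext_apply_sp, zero_mul, zero_add]
        have hterm2 : ∀ y, pad i₀ v' (i₀.succAbove x) (i₀.succAbove y) *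
            (d₂ (σ (i₀.succAbove y)) * U₂ (σ (i₀.succAbove y)) j)
            = v' x y * (d' (σ' y) * U₂ ((σ' y).succ) j) := by
          intro y
          rw [ext_apply_ss, hσs, hd₂s]
        rw [Finset.sum_congr rfl (fun y _ => hterm2 y)]
        rcases eq_or_ne j 0 with rfl | hj
        · rw [hCcol _ (Fin.succAbove_ne i₀ x)]
          refine (Finset.sum_eq_zero ?_).symm
          intro y _
          rw [hU₂s0, mul_zero, mul_zero]
        · obtain ⟨z, rfl⟩ := Fin.exists_succAbove_eq hj
          rw [Fin.zero_succAbove] at *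
          have hCC : C (i₀.succAbove x) z.succ = C' x z := rfl
          rw [hCC, hfact, Matrix.mul_apply]
          have hPD' : σ'.permMatrix K * (Matrix.diagonal d' * u') =
              (Matrix.diagonal d' * u').submatrix σ' id :=
            PEquiv.toMatrix_toPEquiv_mul σ' _
          rw [hPD']
          apply Finset.sum_congr rfl
          intro y _
          rw [Matrix.submatrix_apply, Matrix.diagonal_mul, id, hU₂ss]
    -- final assembly
    have hLV' : LowU (1 - X) := by
      rw [sub_eq_add_neg, hXdef, neg_colM]
      exact LowU.one_add_colM (fun i h => by simp [hcdef, h])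
    have hUY' : UpU (1 - Y) := by
      rw [sub_eq_add_neg, hYdef, neg_rowM]
      exact UpU.one_add_rowM (fun j h => by simp [hrdef, h])
    have hAC : (1 - X) * C * (1 - Y) = A := by
      rw [hCform]
      simp only [← mul_assoc]
      rw [one_sub_mul_one_add hX2, one_mul, mul_assoc, one_add_mul_one_sub hY2, mul_one]
    refine ⟨σ, (1 - X) * V₂, d₂, U₂ * (1 - Y), ?_, ?_, ?_, ?_⟩
    · exact hLV'.mul (hV₂def ▸ hv'.pad)
    · intro i
      rcases eq_or_ne i 0 with rfl | hi
      · exact hd₂0 ▸ hpiv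
      · obtain ⟨b, rfl⟩ := Fin.exists_succAbove_eq hi
        rw [Fin.zero_succAbove, hd₂s]
        exact hd' b
    · exact (hU₂def ▸ hu'.pad).mul hUY'
    · rw [← hAC, hKey]
      simp only [mul_assoc]


end BDU

section Glue
open PS

namespace BDU

theorem permMatrix_map {n : ℕ} {R S : Type*} [CommRing R] [CommRing S] (f : R →+* S)
    (σ : Equiv.Perm (Fin n)) : (σ.permMatrix R).map f = σ.permMatrix S := by
  ext i j
  simp only [Matrix.map_apply, Equiv.Perm.permMatrix, PEquiv.toMatrix_apply]
  split_ifs <;> simp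

/-- the coercion of the inverse of a block-triangular element of `GL` is block-triangular. -/
theorem coe_inv_blockTriangular {n : ℕ} {K : Type*} [CommRing K] [DecidableEq K]
    {α : Type*} [LinearOrder α] {b : Fin n → α} (A : GL (Fin n) K)
    (h : Matrix.BlockTriangular (A : Matrix (Fin n) (Fin n) K) b) :
    Matrix.BlockTriangular ((A⁻¹ : GL (Fin n) K) : Matrix (Fin n) (Fin n) K) b := by
  haveI := A.invertible
  have h2 := Matrix.blockTriangular_inv_of_blockTriangular h
  rwa [← Matrix.coe_units_inv] at h2

variable {n : ℕ} {R : Type*} [CommRing R] [IsLocalRing R]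

theorem red_val (h : GL (Fin n) R) :
    ((red n R h : GL (Fin n) (IsLocalRing.ResidueField R)) :
      Matrix (Fin n) (Fin n) (IsLocalRing.ResidueField R))
      = (h : Matrix (Fin n) (Fin n) R).map (IsLocalRing.residue R) := rfl

theorem uniq {w₁ w₂ v₁ v₂ l₁ l₂ u₁ u₂ g₁ g₂ : GL (Fin n) R}
    (hw₁ : IsW w₁) (hw₂ : IsW w₂) (hv₁ : IsV v₁) (hv₂ : IsV v₂)
    (hl₁ : IsL l₁) (hl₂ : IsL l₂) (hu₁ : IsU u₁) (hu₂ : IsU u₂)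
    (hg₁ : red n R g₁ = 1) (hg₂ : red n R g₂ = 1)
    (h : v₁ * w₁ * l₁ * u₁ * g₁ = v₂ * w₂ * l₂ * u₂ * g₂) : w₁ = w₂ := by
  classical
  obtain ⟨σ₁, hσ₁⟩ := hw₁
  obtain ⟨σ₂, hσ₂⟩ := hw₂
  set k := IsLocalRing.ResidueField R with hk
  set F : GL (Fin n) R →* GL (Fin n) k := red n R with hF
  have hE : F v₁ * F w₁ * (F l₁ * F u₁) = F v₂ * F w₂ * (F l₂ * F u₂) := by
    have h2 := congrArg F h
    simp only [_root_.map_mul] at h2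
    rw [hg₁, hg₂] at h2
    simp only [mul_one] at h2
    simpa [mul_assoc] using h2
  set N : GL (Fin n) k := (F v₂)⁻¹ * F v₁ with hN
  set T : GL (Fin n) k := (F l₂ * F u₂) * (F l₁ * F u₁)⁻¹ with hT
  have hTN : (F w₂)⁻¹ * N * F w₁ = T := by
    calc (F w₂)⁻¹ * N * F w₁
        = (F v₂ * F w₂)⁻¹ * (F v₁ * F w₁ * (F l₁ * F u₁)) * (F l₁ * F u₁)⁻¹ := by
          rw [hN]; group
      _ = (F v₂ * F w₂)⁻¹ * (F v₂ * F w₂ * (F l₂ * F u₂)) * (F l₁ * F u₁)⁻¹ := by rw [hE]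
      _ = T := by rw [hT]; group
  -- N is lower triangular
  have hlowF : ∀ (v : GL (Fin n) R), IsV v →
      Matrix.BlockTriangular (F v : Matrix (Fin n) (Fin n) k) OrderDual.toDual := by
    intro v hv i j hij
    rw [red_val, Matrix.map_apply, hv.2 i j hij, map_zero]
  have hNval : Matrix.BlockTriangular (N : Matrix (Fin n) (Fin n) k) OrderDual.toDual :=
    (coe_inv_blockTriangular (F v₂) (hlowF v₂ hv₂)).mul (hlowF v₁ hv₁)
  -- T is upper triangular
  have hupF : ∀ (u : GL (Fin n) R), IsU u →
      Matrix.BlockTriangular (F u : Matrix (Fin n) (Fin n) k) id := by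
    intro u hu i j hij
    rw [red_val, Matrix.map_apply, hu.2 i j hij, map_zero]
  have hupFl : ∀ (l : GL (Fin n) R), IsL l →
      Matrix.BlockTriangular (F l : Matrix (Fin n) (Fin n) k) id := by
    intro l hl i j hij
    rw [red_val, Matrix.map_apply, hl i j (ne_of_gt hij), map_zero]
  have hTval : Matrix.BlockTriangular (T : Matrix (Fin n) (Fin n) k) id :=
    ((hupFl l₂ hl₂).mul (hupF u₂ hu₂)).mul
      (coe_inv_blockTriangular (F l₁ * F u₁) ((hupFl l₁ hl₁).mul (hupF u₁ hu₁)))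
  have hTdiag : ∀ i, (T : Matrix (Fin n) (Fin n) k) i i ≠ 0 := by
    have hdet : IsUnit (T : Matrix (Fin n) (Fin n) k).det :=
      (Matrix.isUnit_iff_isUnit_det _).mp ⟨T, rfl⟩
    rw [Matrix.det_of_upperTriangular hTval, isUnit_iff_ne_zero] at hdet
    intro i h0
    exact hdet (Finset.prod_eq_zero (Finset.mem_univ i) h0)
  -- permutation matrices
  have hFw₁ : F w₁ = permGL σ₁ :=
    Units.ext (by rw [red_val, hσ₁, permMatrix_map]; rfl)
  have hFw₂ : F w₂ = permGL σ₂ :=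
    Units.ext (by rw [red_val, hσ₂, permMatrix_map]; rfl)
  have hFw₁val : (F w₁ : Matrix (Fin n) (Fin n) k) = σ₁.permMatrix k := by rw [hFw₁]; rfl
  have hFw₂inv : (((F w₂)⁻¹ : GL (Fin n) k) : Matrix (Fin n) (Fin n) k)
      = (σ₂⁻¹).permMatrix k := by rw [hFw₂]; rfl
  have hTsub : ∀ i j, (T : Matrix (Fin n) (Fin n) k) i j
      = (N : Matrix (Fin n) (Fin n) k) ((σ₂⁻¹ : Equiv.Perm (Fin n)) i)
        ((σ₁⁻¹ : Equiv.Perm (Fin n)) j) := by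
    intro i j
    have h1 : (T : Matrix (Fin n) (Fin n) k)
        = (((F w₂)⁻¹ : GL (Fin n) k) : Matrix (Fin n) (Fin n) k)
          * (N : Matrix (Fin n) (Fin n) k) * (F w₁ : Matrix (Fin n) (Fin n) k) := by
      rw [← hTN]; rfl
    rw [h1, hFw₂inv, hFw₁val]
    rw [Equiv.Perm.permMatrix, Equiv.Perm.permMatrix, PEquiv.mul_toMatrix_toPEquiv,
      PEquiv.toMatrix_toPEquiv_mul]
    simp [Equiv.Perm.inv_def]
  have hle : ∀ i, (σ₁⁻¹ : Equiv.Perm (Fin n)) i ≤ (σ₂⁻¹ : Equiv.Perm (Fin n)) i := by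
    intro i
    by_contra hlt
    push_neg at hlt
    apply hTdiag i
    rw [hTsub]
    exact hNval hlt
  have hsum : ∑ i, ((σ₁⁻¹ : Equiv.Perm (Fin n)) i : ℕ)
      = ∑ i, ((σ₂⁻¹ : Equiv.Perm (Fin n)) i : ℕ) := by
    rw [Equiv.sum_comp (σ₁⁻¹ : Equiv.Perm (Fin n)) (fun j : Fin n => (j : ℕ)),
      Equiv.sum_comp (σ₂⁻¹ : Equiv.Perm (Fin n)) (fun j : Fin n => (j : ℕ))]
  have heq : ∀ i, (σ₁⁻¹ : Equiv.Perm (Fin n)) i = (σ₂⁻¹ : Equiv.Perm (Fin n)) i := by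
    have h2 := (Finset.sum_eq_sum_iff_of_le
      (fun i (_ : i ∈ Finset.univ) => (show ((σ₁⁻¹ : Equiv.Perm (Fin n)) i : ℕ) ≤ ((σ₂⁻¹ : Equiv.Perm (Fin n)) i : ℕ) from hle i))).mp hsum
    intro i
    exact Fin.val_injective (h2 i (Finset.mem_univ i))
  have hperm : σ₁ = σ₂ := inv_injective (Equiv.ext heq)
  exact Units.ext (by rw [hσ₁, hσ₂, hperm])

end BDU
end Glue

open PS in
/-- Proposition 3.2(e): `G` is the disjoint union over `w ∈ W` of the sets
`G_w = V·w·L·U·G_0`, for a finite commutative local ring `R`. -/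
theorem bruhat_disjoint_union (n : ℕ) (R : Type*) [CommRing R] [IsLocalRing R] [Finite R]
    (g : GL (Fin n) R) :
    ∃! w : GL (Fin n) R, IsW w ∧
      ∃ v ∈ Vset n R, ∃ l ∈ Lset n R, ∃ u ∈ Uset n R, ∃ g₀ ∈ G0 n R,
        g = v * w * l * u * g₀ := by
  classical
  set k := IsLocalRing.ResidueField R with hk
  set res : R →+* k := IsLocalRing.residue R with hres
  have hressurj : Function.Surjective res := IsLocalRing.residue_surjective
  set s : k → R := Function.surjInv hressurj with hsdef
  have hs : ∀ x, res (s x) = x := fun x => Function.surjInv_eq hressurj x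
  -- decompose the reduction of g over the residue field
  have hdet : IsUnit ((red n R g : GL (Fin n) k) : Matrix (Fin n) (Fin n) k).det :=
    (Matrix.isUnit_iff_isUnit_det _).mp ⟨red n R g, rfl⟩
  obtain ⟨σ, vb, db, ub, hvb, hdb, hub, hfact⟩ :=
    BDU.exists_bruhat n ((red n R g : GL (Fin n) k) : Matrix (Fin n) (Fin n) k) hdet
  -- lift the lower unitriangular part
  set vm : Matrix (Fin n) (Fin n) R :=
    Matrix.of (fun i j => if i = j then 1 else if j < i then s (vb i j) else 0) with hvmdef
  have hvmLow : BDU.LowU vm := by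
    constructor
    · intro i; simp [hvmdef]
    · intro i j hij
      simp [hvmdef, ne_of_lt hij, not_lt.mpr hij.le]
  have hvmmap : vm.map res = vb := by
    ext i j
    rcases lt_trichotomy i j with h | h | h
    · rw [Matrix.map_apply]
      simp only [hvmdef, Matrix.of_apply, if_neg (ne_of_lt h), if_neg (not_lt.mpr h.le)]
      rw [map_zero, hvb.2 i j h]
    · subst h
      rw [Matrix.map_apply, hvmLow.1 i, _root_.map_one, hvb.1 i]
    · rw [Matrix.map_apply]
      simp only [hvmdef, Matrix.of_apply, if_neg (ne_of_gt h), if_pos h]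
      exact hs _
  -- lift the upper unitriangular part
  set um : Matrix (Fin n) (Fin n) R :=
    Matrix.of (fun i j => if i = j then 1 else if i < j then s (ub i j) else 0) with humdef
  have humUp : BDU.UpU um := by
    constructor
    · intro i; simp [humdef]
    · intro i j hij
      simp [humdef, ne_of_gt hij, not_lt.mpr hij.le]
  have hummap : um.map res = ub := by
    ext i j
    rcases lt_trichotomy i j with h | h | h
    · rw [Matrix.map_apply]
      simp only [humdef, Matrix.of_apply, if_neg (ne_of_lt h), if_pos h]
      exact hs _
    · subst h
      rw [Matrix.map_apply, humUp.1 i, _root_.map_one, hub.1 i]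
    · rw [Matrix.map_apply]
      simp only [humdef, Matrix.of_apply, if_neg (ne_of_gt h), if_neg (not_lt.mpr h.le)]
      rw [map_zero, hub.2 i j h]
  -- lift the diagonal part
  set dR : Fin n → R := fun i => s (db i) with hdRdef
  have hdru : ∀ i, IsUnit (dR i) := by
    intro i
    rw [← IsLocalRing.notMem_maximalIdeal]
    intro hmem
    have : res (dR i) = 0 := Ideal.Quotient.eq_zero_iff_mem.mpr hmem
    rw [hs] at this
    exact hdb i this
  set dU : Fin n → Rˣ := fun i => (hdru i).unit with hdUdef
  -- the GL elements
  have hvunit : IsUnit vm := (Matrix.isUnit_iff_isUnit_det vm).mpr (by rw [hvmLow.det]; exact isUnit_one)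
  have huunit : IsUnit um := (Matrix.isUnit_iff_isUnit_det um).mpr (by rw [humUp.det]; exact isUnit_one)
  set vGL : GL (Fin n) R := hvunit.unit with hvGLdef
  set uGL : GL (Fin n) R := huunit.unit with huGLdef
  have hvGLval : (vGL : Matrix (Fin n) (Fin n) R) = vm := hvunit.unit_spec
  have huGLval : (uGL : Matrix (Fin n) (Fin n) R) = um := huunit.unit_spec
  set wGL : GL (Fin n) R := permGL σ with hwGLdef
  set lGL : GL (Fin n) R := diagGL dU with hlGLdef
  set g0 : GL (Fin n) R := (vGL * wGL * lGL * uGL)⁻¹ * g with hg0def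
  -- reduction of the product
  have hlGLval : (lGL : Matrix (Fin n) (Fin n) R) = Matrix.diagonal dR := by
    have hfun : (fun i => ((dU i : Rˣ) : R)) = dR := funext fun i => (hdru i).unit_spec
    show Matrix.diagonal (fun i => ((dU i : Rˣ) : R)) = Matrix.diagonal dR
    rw [hfun]
  have hprodred : red n R (vGL * wGL * lGL * uGL) = red n R g := by
    apply Units.ext
    show (((vGL * wGL * lGL * uGL) : GL (Fin n) R) : Matrix (Fin n) (Fin n) R).map res
      = ((red n R g : GL (Fin n) k) : Matrix (Fin n) (Fin n) k)
    rw [hfact]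
    have : ((vGL * wGL * lGL * uGL : GL (Fin n) R) : Matrix (Fin n) (Fin n) R)
        = vm * (σ.permMatrix R * (Matrix.diagonal dR * um)) := by
      rw [Units.val_mul, Units.val_mul, Units.val_mul, hvGLval, huGLval, hlGLval]
      show vm * (σ.permMatrix R) * Matrix.diagonal dR * um = _
      simp only [mul_assoc]
    rw [this]
    rw [Matrix.map_mul, Matrix.map_mul, Matrix.map_mul, hvmmap, hummap,
      BDU.permMatrix_map, Matrix.diagonal_map (map_zero res)]
    have hdd : (fun m => res (dR m)) = db := funext fun i => hs _
    rw [hdd]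
  have hg0mem : red n R g0 = 1 := by
    rw [hg0def, _root_.map_mul, map_inv, hprodred, inv_mul_cancel]
  refine ⟨wGL, ⟨⟨σ, rfl⟩, vGL, ?_, lGL, ?_, uGL, ?_, g0, hg0mem, ?_⟩, ?_⟩
  · show IsV vGL
    constructor
    · intro i
      rw [hvGLval]
      simp [hvmdef]
    · intro i j hij
      rw [hvGLval]
      simp [hvmdef, ne_of_lt hij, not_lt.mpr hij.le]
  · show IsL lGL
    intro i j hij
    rw [hlGLval]
    exact Matrix.diagonal_apply_ne _ hij
  · show IsU uGL
    constructor
    · intro i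
      rw [huGLval]
      simp [humdef]
    · intro i j hij
      rw [huGLval]
      simp [humdef, ne_of_gt hij, not_lt.mpr hij.le]
  · rw [hg0def]
    group
  · rintro w' ⟨hw', v₁, hv₁, l₁, hl₁, u₁, hu₁, g₁, hg₁, hEq⟩
    refine BDU.uniq (w₂ := wGL) (v₂ := vGL) (l₂ := lGL) (u₂ := uGL) (g₂ := g0) hw' ⟨σ, rfl⟩ hv₁ ?_ hl₁ ?_ hu₁ ?_ hg₁ hg0mem ?_
    · constructor
      · intro i
        rw [hvGLval]; simp [hvmdef]
      · intro i j hij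
        rw [hvGLval]; simp [hvmdef, ne_of_lt hij, not_lt.mpr hij.le]
    · intro i j hij
      rw [hlGLval]
      exact Matrix.diagonal_apply_ne _ hij
    · constructor
      · intro i
        rw [huGLval]; simp [humdef]
      · intro i j hij
        rw [huGLval]; simp [humdef, ne_of_gt hij, not_lt.mpr hij.le]
    · rw [← hEq, hg0def]
      group
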